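/- Let r, r̂ ∈ [0,2). If the polynomials xy(x² + rxy + y²) and xy(x² + r̂xy + y²) in P₄ are projectively equivalent, then r = r̂. -/

import Mathlib

noncomputable section

open scoped Matrix

attribute [local instance 100] LieRing.ofAssociativeRing

abbrev V7 : Type := Fin 7 → ℝ
abbrev M7 : Type := Matrix (Fin 7) (Fin 7) ℝ
abbrev M2 : Type := Matrix (Fin 2) (Fin 2) ℝ

/-- standard basis vectors of `V7` -/
def stdB (i : Fin 7) : V7 := Pi.single i 1

/-- the symmetric bilinear form of signature (4,3):
`⟨x,y⟩ = x₁y₅ + x₅y₁ + x₂y₆ + x₆y₂ + x₃y₇ + x₇y₃ − x₄y₄` (1-indexed). -/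
def bform (x y : V7) : ℝ :=
  x 0 * y 4 + x 4 * y 0 + x 1 * y 5 + x 5 * y 1 + x 2 * y 6 + x 6 * y 2 - x 3 * y 3

/-- `e^i ∧ e^j ∧ e^k` evaluated on a triple of vectors. -/
def wedge3 (i j k : Fin 7) (u v w : V7) : ℝ :=
  u i * (v j * w k - v k * w j) - u j * (v i * w k - v k * w i)
    + u k * (v i * w j - v j * w i)

/-- the generic 3-form
`ω₀ = √2(e¹∧e⁶∧e⁷ + e²∧e³∧e⁵) − e⁴∧(e¹∧e⁵ − e²∧e⁶ − e³∧e⁷)` (1-indexed). -/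
def omega0 (u v w : V7) : ℝ :=
  Real.sqrt 2 * (wedge3 0 5 6 u v w + wedge3 1 2 4 u v w)
    - (wedge3 3 0 4 u v w - wedge3 3 1 5 u v w - wedge3 3 2 6 u v w)

/-- membership in `g₂*` -/
def inG2 (X : M7) : Prop :=
  ∀ u v w : V7,
    omega0 (X.mulVec u) v w + omega0 u (X.mulVec v) w + omega0 u v (X.mulVec w) = 0

def InvariantUnder (h : LieSubalgebra ℝ M7) (U : Submodule ℝ V7) : Prop :=
  ∀ X ∈ h, ∀ v ∈ U, X.mulVec v ∈ U

def IsIsotropic (U : Submodule ℝ V7) : Prop :=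
  ∀ u ∈ U, ∀ u' ∈ U, bform u u' = 0

def IsNondeg (U : Submodule ℝ V7) : Prop :=
  ∀ u ∈ U, (∀ u' ∈ U, bform u u' = 0) → u = 0

def IsIndecomposable (h : LieSubalgebra ℝ M7) : Prop :=
  ∀ U : Submodule ℝ V7, InvariantUnder h U → U ≠ ⊥ → U ≠ ⊤ → ¬ IsNondeg U

def IsIrreducibleSub (h : LieSubalgebra ℝ M7) (U : Submodule ℝ V7) : Prop :=
  InvariantUnder h U ∧ U ≠ ⊥ ∧
    ∀ W : Submodule ℝ V7, InvariantUnder h W → W ≤ U → W = ⊥ ∨ W = U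

/-- the socle: sum of all irreducible invariant subspaces -/
def socleV (h : LieSubalgebra ℝ M7) : Submodule ℝ V7 :=
  sSup {U | IsIrreducibleSub h U}

def sqrt2 : ℝ := Real.sqrt 2

/-- the matrix `h(A,v,u,y)` of the Type I normal form -/
def hImat (A : M2) (v : ℝ) (u y : Fin 2 → ℝ) : M7 :=
  !![A.trace, -u 1, u 0, sqrt2 * v, 0, -y 0, -y 1;
     0, A 0 0, A 0 1, sqrt2 * u 0, y 0, 0, v;
     0, A 1 0, A 1 1, sqrt2 * u 1, y 1, -v, 0;
     0, 0, 0, 0, sqrt2 * v, sqrt2 * u 0, sqrt2 * u 1;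
     0, 0, 0, 0, -A.trace, 0, 0;
     0, 0, 0, 0, u 1, -A 0 0, -A 1 0;
     0, 0, 0, 0, -u 0, -A 0 1, -A 1 1]

def hIset : Set M7 := {X | ∃ A v u y, X = hImat A v u y}

def mSet : Set M7 := {X | ∃ v u y, X = hImat 0 v u y}

def hsSet : Set M7 := {X | ∃ A v y, X = hImat A v 0 y}

/-- a basis realizing the Type I normal form -/
def TypeIBasis (b : Module.Basis (Fin 7) ℝ V7) : Prop :=
  (∀ i j, bform (b i) (b j) = bform (stdB i) (stdB j)) ∧
  (∀ i j k, omega0 (b i) (b j) (b k) = omega0 (stdB i) (stdB j) (stdB k))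

/-- the matrix of (the endomorphism given by) `X` with respect to the basis `b` -/
def matrixWrt (b : Module.Basis (Fin 7) ℝ V7) (X : M7) : M7 :=
  LinearMap.toMatrix b b X.mulVecLin

def matSet (b : Module.Basis (Fin 7) ℝ V7) (h : LieSubalgebra ℝ M7) : Set M7 :=
  matrixWrt b '' (h : Set M7)

/-- the space `K(S)` of algebraic curvature maps with values in `S` -/
def curvSet (S : Set M7) : Set (V7 →ₗ[ℝ] V7 →ₗ[ℝ] M7) :=
  {R | (∀ x, R x x = 0) ∧ (∀ x y, R x y ∈ S) ∧
    ∀ x y z, (R x y).mulVec z + (R y z).mulVec x + (R z x).mulVec y = 0}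

/-- `h` is a Berger algebra -/
def IsBerger (h : LieSubalgebra ℝ M7) : Prop :=
  h.toSubmodule =
    Submodule.span ℝ {X | ∃ R ∈ curvSet (h : Set M7), ∃ x y : V7, X = R x y}

def Cmat (a : ℝ) : M2 := !![a, -1; 1, a]
def Smat : M2 := !![1, 1; 0, 1]
def Nmat : M2 := !![0, 1; 0, 0]
def Dmat (μ : ℝ) : M2 := !![1, 0; 0, μ]
def diagSet : Set M2 := {A | ∃ a d : ℝ, A = !![a, 0; 0, d]}
def u1Set : Set M2 := {A | ∃ a b : ℝ, A = !![a, -b; b, a]}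
def b2Set : Set M2 := {A | A 1 0 = 0}
def b2hatSet : Set M2 := {A | ∃ s t : ℝ, A = s • (1 : M2) + t • Nmat}
def sLamSet (lam : ℝ) : Set M2 :=
  {A | ∃ s t : ℝ, A = s • !![lam, 0; 0, lam - 1] + t • Nmat}
def slSet : Set M2 := {A | A.trace = 0}
def spanLine (X : M2) : Set M2 := {A | ∃ t : ℝ, A = t • X}

/-- the projection `h(A,v,u,y) ↦ A` applied to a subset of `h^I` -/
def aprojI (S : Set M7) : Set M2 := {A | ∃ v u y, hImat A v u y ∈ S}

/-- `a ⋉ m` inside `h^I` -/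
def semidirI (aS : Set M2) : Set M7 :=
  {X | ∃ A ∈ aS, ∃ v u y, X = hImat A v u y}

def bformII (x y : V7) : ℝ :=
  x 0 * y 5 + x 5 * y 0 + x 1 * y 6 + x 6 * y 1 + x 2 * y 4 + x 4 * y 2 - x 3 * y 3

def omegaII (u v w : V7) : ℝ :=
  Real.sqrt 2 * (-(wedge3 0 4 6 u v w) + wedge3 1 2 5 u v w)
    - (wedge3 3 0 5 u v w - wedge3 3 1 6 u v w - wedge3 3 2 4 u v w)

/-- a basis realizing the Type II normal form -/
def TypeIIBasis (b : Module.Basis (Fin 7) ℝ V7) : Prop :=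
  (∀ i j, bform (b i) (b j) = bformII (stdB i) (stdB j)) ∧
  (∀ i j k, omega0 (b i) (b j) (b k) = omegaII (stdB i) (stdB j) (stdB k))

def sigmaMat (z : Fin 4 → ℝ) : Matrix (Fin 2) (Fin 3) ℝ :=
  !![z 1, sqrt2 * z 2, z 3; z 0, sqrt2 * z 1, z 2]

def rhoMat (A : M2) : Matrix (Fin 3) (Fin 3) ℝ :=
  !![A 0 0 - A 1 1, -(sqrt2 * A 0 1), 0;
     -(sqrt2 * A 1 0), 0, -(sqrt2 * A 0 1);
     0, -(sqrt2 * A 1 0), -(A 0 0) + A 1 1]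

/-- the matrix `h(A,z,c)` of the Type II normal form -/
def hIImat (A : M2) (z : Fin 4 → ℝ) (c : ℝ) : M7 :=
  !![A 0 0, A 0 1, z 1, sqrt2 * z 2, z 3, 0, -c;
     A 1 0, A 1 1, z 0, sqrt2 * z 1, z 2, c, 0;
     0, 0, A 0 0 - A 1 1, -(sqrt2 * A 0 1), 0, -z 3, -z 2;
     0, 0, -(sqrt2 * A 1 0), 0, -(sqrt2 * A 0 1), sqrt2 * z 2, sqrt2 * z 1;
     0, 0, 0, -(sqrt2 * A 1 0), -(A 0 0) + A 1 1, -z 1, -z 0;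
     0, 0, 0, 0, 0, -(A 0 0), -(A 1 0);
     0, 0, 0, 0, 0, -(A 0 1), -(A 1 1)]

def hIIset : Set M7 := {X | ∃ A z c, X = hIImat A z c}

def nSet : Set M7 := {X | ∃ z c, X = hIImat 0 z c}

/-- the projection `h(A,z,c) ↦ A` applied to a subset of `h^II` -/
def aprojII (S : Set M7) : Set M2 := {A | ∃ z c, hIImat A z c ∈ S}

/-- `a ⋉ n₁` inside `h^II`, for `n₁ = {h(0,z,c) : z ∈ Z, c ∈ ℝ}` -/
def semidirII (aS : Set M2) (Z : Set (Fin 4 → ℝ)) : Set M7 :=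
  {X | ∃ A ∈ aS, ∃ z ∈ Z, ∃ c : ℝ, X = hIImat A z c}

/-- `ℝ·h(A₀,z₀,0) + {h(0,z,c) : z ∈ Z, c ∈ ℝ}` inside `h^II` -/
def affSemiII (A0 : M2) (z0 : Fin 4 → ℝ) (Z : Set (Fin 4 → ℝ)) : Set M7 :=
  {X | ∃ t : ℝ, ∃ z ∈ Z, ∃ c : ℝ, X = hIImat (t • A0) (t • z0 + z) c}

/-- the space of `z ∈ ℝ⁴` supported on the index set `s` -/
def nZ (s : Set (Fin 4)) : Set (Fin 4 → ℝ) := {z | ∀ l, l ∉ s → z l = 0}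

abbrev Poly2 := MvPolynomial (Fin 2) ℝ
def Px : Poly2 := MvPolynomial.X 0
def Py : Poly2 := MvPolynomial.X 1

/-- the `GL(2,ℝ)`-action `(A·p)(x,y) = p((x,y)A)` on polynomials -/
def polyAct (A : M2) (p : Poly2) : Poly2 :=
  MvPolynomial.aeval (fun i => A 0 i • Px + A 1 i • Py) p

/-- projective equivalence of polynomials -/
def ProjEquiv (p q : Poly2) : Prop :=
  ∃ A : M2, IsUnit A ∧ ∃ c : ℝ, c ≠ 0 ∧ polyAct A p = c • q

set_option maxHeartbeats 1000000 in
/-- for `r, r̂ ∈ [0,2)`, projective equivalence of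
`xy(x² + rxy + y²)` and `xy(x² + r̂xy + y²)` forces `r = r̂`. -/
theorem stmt17 (r rh : ℝ) (hr : r ∈ Set.Ico (0 : ℝ) 2) (hrh : rh ∈ Set.Ico (0 : ℝ) 2)
    (heq : ProjEquiv (Px * Py * (Px ^ 2 + MvPolynomial.C r * Px * Py + Py ^ 2))
      (Px * Py * (Px ^ 2 + MvPolynomial.C rh * Px * Py + Py ^ 2))) :
    r = rh := by
  obtain ⟨A, hA, c, hc, hpoly⟩ := heq
  have hev : ∀ x y : ℝ, (A 0 0*x + A 1 0*y)*(A 0 1*x + A 1 1*y)*((A 0 0*x + A 1 0*y)^2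
      + r*((A 0 0*x + A 1 0*y)*(A 0 1*x + A 1 1*y)) + (A 0 1*x + A 1 1*y)^2)
      = c*(x*y*(x^2 + rh*(x*y) + y^2)) := by
    intro x y
    have h := congrArg (MvPolynomial.eval ![x, y]) hpoly
    simp only [polyAct, Px, Py, map_mul, map_add, map_pow, MvPolynomial.aeval_X,
      MvPolynomial.smul_eq_C_mul, MvPolynomial.eval_mul, MvPolynomial.eval_add,
      MvPolynomial.eval_pow, MvPolynomial.eval_C, MvPolynomial.eval_X,
      MvPolynomial.aeval_C, MvPolynomial.algebraMap_eq,
      Matrix.cons_val_zero, Matrix.cons_val_one, Matrix.head_cons] at h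
    linear_combination h
  set a := A 0 0 with ha
  set b := A 0 1 with hb
  set g := A 1 0 with hg
  set d := A 1 1 with hd
  have hdet : a * d - b * g ≠ 0 := by
    have h1 : IsUnit A.det := (Matrix.isUnit_iff_isUnit_det A).mp hA
    have h2 : A.det ≠ 0 := h1.ne_zero
    rwa [Matrix.det_fin_two] at h2
  -- coefficient equations
  have hb0 : a*b^3 + a^2*b^2*r + a^3*b = 0 := by linear_combination hev 1 0
  have hb4 : g*d^3 + g^2*d^2*r + g^3*d = 0 := by linear_combination hev 0 1
  have hb2 : 3*b^2*g*d + b^2*g^2*r + 3*a*b*d^2 + 4*a*b*g*d*r + 3*a*b*g^2 + a^2*d^2*r + 3*a^2*g*d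
      = c*rh := by
    linear_combination (1/2)*(hev 1 1) + (1/2)*(hev 1 (-1)) - hb0 - hb4
  have hb1 : b^3*g + 3*a*b^2*d + 2*a*b^2*g*r + 2*a^2*b*d*r + 3*a^2*b*g + a^3*d = c := by
    linear_combination (1/4)*(hev 1 1) - (1/4)*(hev 1 (-1)) + (1/12)*(hev 2 1)
      - (1/12)*(hev 1 2) - (15/12)*hb0 + (15/12)*hb4
  have hb3 : 3*b*g*d^2 + 2*b*g^2*d*r + b*g^3 + a*d^3 + 2*a*g*d^2*r + 3*a*g^2*d = c := by
    linear_combination (1/4)*(hev 1 1) - (1/4)*(hev 1 (-1)) - (1/12)*(hev 2 1)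
      + (1/12)*(hev 1 2) + (15/12)*hb0 - (15/12)*hb4
  -- invariants
  have hI : (a*d - b*g)^4 * (r^2 - 3) = c^2 * (rh^2 - 3) := by
    linear_combination (12*(g*d^3 + g^2*d^2*r + g^3*d))*hb0
      + (-3*(3*b*g*d^2 + 2*b*g^2*d*r + b*g^3 + a*d^3 + 2*a*g*d^2*r + 3*a*g^2*d))*hb1
      + (3*b^2*g*d + b^2*g^2*r + 3*a*b*d^2 + 4*a*b*g*d*r + 3*a*b*g^2 + a^2*d^2*r + 3*a^2*g*d
          + c*rh)*hb2
      + (-3*c)*hb3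
  have hJ : (a*d - b*g)^6 * (9*r - 2*r^3) = c^3 * (9*rh - 2*rh^3) := by
    linear_combination
      (72*(3*b^2*g*d + b^2*g^2*r + 3*a*b*d^2 + 4*a*b*g*d*r + 3*a*b*g^2 + a^2*d^2*r + 3*a^2*g*d)
        *(g*d^3 + g^2*d^2*r + g^3*d)
        - 27*(3*b*g*d^2 + 2*b*g^2*d*r + b*g^3 + a*d^3 + 2*a*g*d^2*r + 3*a*g^2*d)^2)*hb0
      + (-27*((b^3*g + 3*a*b^2*d + 2*a*b^2*g*r + 2*a^2*b*d*r + 3*a^2*b*g + a^3*d) + c)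
          *(g*d^3 + g^2*d^2*r + g^3*d)
        + 9*(3*b^2*g*d + b^2*g^2*r + 3*a*b*d^2 + 4*a*b*g*d*r + 3*a*b*g^2 + a^2*d^2*r + 3*a^2*g*d)
          *(3*b*g*d^2 + 2*b*g^2*d*r + b*g^3 + a*d^3 + 2*a*g*d^2*r + 3*a*g^2*d))*hb1
      + (9*c*(3*b*g*d^2 + 2*b*g^2*d*r + b*g^3 + a*d^3 + 2*a*g*d^2*r + 3*a*g^2*d)
        - 2*((3*b^2*g*d + b^2*g^2*r + 3*a*b*d^2 + 4*a*b*g*d*r + 3*a*b*g^2 + a^2*d^2*r + 3*a^2*g*d)^2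
          + (3*b^2*g*d + b^2*g^2*r + 3*a*b*d^2 + 4*a*b*g*d*r + 3*a*b*g^2 + a^2*d^2*r + 3*a^2*g*d)*c*rh
          + c^2*rh^2))*hb2
      + (9*c^2*rh)*hb3 + (-27*c^2)*hb4
  have hP3 : c^6 * (rh^2 - 3)^3 = (a*d - b*g)^12 * (r^2 - 3)^3 := by
    linear_combination (-(c^4*(rh^2-3)^2 + c^2*(rh^2-3)*(a*d - b*g)^4*(r^2-3)
      + (a*d - b*g)^8*(r^2-3)^2))*hI
  have hQ2 : c^6 * (9*rh - 2*rh^3)^2 = (a*d - b*g)^12 * (9*r - 2*r^3)^2 := by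
    linear_combination (-(c^3*(9*rh-2*rh^3) + (a*d - b*g)^6*(9*r-2*r^3)))*hJ
  have key : (r^2 - 3)^3 * (9*rh - 2*rh^3)^2 = (9*r - 2*r^3)^2 * (rh^2 - 3)^3 := by
    apply mul_left_cancel₀ (pow_ne_zero 12 hdet)
    linear_combination (-(9*rh - 2*rh^3)^2)*hP3 + ((rh^2 - 3)^3)*hQ2
  -- positivity facts
  have hD2 : 0 < (a*d - b*g)^2 :=
    lt_of_le_of_ne (sq_nonneg _) (Ne.symm (pow_ne_zero 2 hdet))
  have hc2 : 0 < c^2 := lt_of_le_of_ne (sq_nonneg _) (Ne.symm (pow_ne_zero 2 hc))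
  -- reduce to r^2 = rh^2
  suffices hsq : r^2 = rh^2 by
    have h0 : (r - rh) * (r + rh) = 0 := by linear_combination hsq
    rcases mul_eq_zero.mp h0 with h | h
    · linarith
    · have hr0 : r = 0 := by linarith [hr.1, hrh.1]
      have hrh0 : rh = 0 := by linarith [hr.1, hrh.1]
      rw [hr0, hrh0]
  by_contra hsq
  clear hev hb0 hb1 hb2 hb3 hJ hP3 hQ2 hpoly hA
  have hu4 : r^2 < 4 := by nlinarith [hr.1, hr.2, sq_nonneg r]
  have hv4 : rh^2 < 4 := by nlinarith [hrh.1, hrh.2, sq_nonneg rh]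
  have hu0 : 0 ≤ r^2 := sq_nonneg r
  have hv0 : 0 ≤ rh^2 := sq_nonneg rh
  -- factor out (r^2 - rh^2)
  have hfac : (r^2 - rh^2) * (27*((r^2)^2*rh^2 - 4*(r^2)^2 + r^2*(rh^2)^2 - 13*(r^2)*(rh^2)
      + 36*r^2 - 4*(rh^2)^2 + 36*rh^2 - 81)) = 0 := by
    linear_combination -key
  have hKz : (r^2)^2*rh^2 - 4*(r^2)^2 + r^2*(rh^2)^2 - 13*(r^2)*(rh^2)
      + 36*r^2 - 4*(rh^2)^2 + 36*rh^2 - 81 = 0 := by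
    rcases mul_eq_zero.mp hfac with h | h
    · exact absurd (by linarith : r^2 = rh^2) hsq
    · linarith
  rcases lt_trichotomy (r^2) 3 with hlt | heq3 | hgt
  · have hv3 : rh^2 < 3 := by
      by_contra h
      push_neg at h
      have h1 : 0 ≤ c^2 * (rh^2 - 3) := mul_nonneg hc2.le (by linarith)
      have h2 : (a*d - b*g)^4 * (r^2 - 3) < 0 := by
        have := mul_pos hD2 hD2
        nlinarith
      linarith [hI]
    nlinarith [mul_pos (by linarith : (0:ℝ) < 3 - r^2) (by linarith : (0:ℝ) < 3 - rh^2),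
      mul_nonneg (by linarith : (0:ℝ) ≤ 4 - rh^2) (sq_nonneg (r^2 - 3)),
      mul_nonneg (by linarith : (0:ℝ) ≤ 4 - r^2) (sq_nonneg (rh^2 - 3))]
  · have h0 : c^2 * (rh^2 - 3) = 0 := by
      linear_combination -hI + (a*d - b*g)^4*heq3
    rcases mul_eq_zero.mp h0 with h | h
    · exact absurd h (pow_ne_zero 2 hc)
    · exact hsq (by linarith)
  · have hv3 : 3 < rh^2 := by
      by_contra h
      push_neg at h
      have h1 : c^2 * (rh^2 - 3) ≤ 0 := mul_nonpos_of_nonneg_of_nonpos hc2.le (by linarith)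
      have h2 : 0 < (a*d - b*g)^4 * (r^2 - 3) := by
        have := mul_pos hD2 hD2
        nlinarith
      linarith [hI]
    nlinarith [mul_pos (by linarith : (0:ℝ) < r^2 - 3) (by linarith : (0:ℝ) < rh^2 - 3),
      mul_nonneg (by linarith : (0:ℝ) ≤ 4 - rh^2) (sq_nonneg (r^2 - 3)),
      mul_nonneg (by linarith : (0:ℝ) ≤ 4 - r^2) (sq_nonneg (rh^2 - 3))]
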